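/- Let (M, μ) be a probability measure space, let 1 < p < n be reals, p* = np/(n−p), p♭ = p(2n−p)/(2(n−p)), let q ∈ (p♭, p*), h < 0, and ε ≥ 0. Let f, a : M → ℝ be integrable with a ≥ 0 a.e., set F = ∫ |f⁻| dμ and A = ∫ a dμ, and assume F > 0 and A ≤ ((p+q)/(2p) · |h|/F)^((q+p)/(q−p)) · |h|(q−p)/(2p). Then, with k₀ = ((p+q)/(2p) · |h|/F)^(q/(q−p)), one has (h/p)·k₀^(p/q) − (k₀/q)·∫ f dμ + (1/q)·∫ a/(k₀^(2/q) + ε)^(q/2) dμ ≤ −(1/p*) · min{(|h|/F)^((2n−p)/p), 1} · ∫ f⁺ dμ. -/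

import Mathlib

open MeasureTheory Real

set_option maxHeartbeats 1000000

theorem stmt5 {M : Type*} [MeasurableSpace M] (μ : Measure M) [IsProbabilityMeasure μ]
    (p n q h ε F A k₀ : ℝ) (hp : 1 < p) (hn : p < n)
    (hq1 : p * (2 * n - p) / (2 * (n - p)) < q) (hq2 : q < n * p / (n - p))
    (hh : h < 0) (hε : 0 ≤ ε)
    (f a : M → ℝ) (hf : Integrable f μ) (ha : Integrable a μ)
    (hanonneg : ∀ᵐ x ∂μ, 0 ≤ a x)
    (hF : F = ∫ x, max (-f x) 0 ∂μ) (hA : A = ∫ x, a x ∂μ) (hFpos : 0 < F)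
    (hsmall : A ≤ ((p + q) / (2 * p) * (|h| / F)) ^ ((q + p) / (q - p))
        * (|h| * (q - p) / (2 * p)))
    (hk₀ : k₀ = ((p + q) / (2 * p) * (|h| / F)) ^ (q / (q - p))) :
    h / p * k₀ ^ (p / q) - k₀ / q * ∫ x, f x ∂μ
      + (1 / q) * ∫ x, a x / (k₀ ^ (2 / q) + ε) ^ (q / 2) ∂μ
      ≤ -(1 / (n * p / (n - p))) * min ((|h| / F) ^ ((2 * n - p) / p)) 1
        * ∫ x, max (f x) 0 ∂μ := by
  have hp0 : 0 < p := lt_trans one_pos hp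
  have hnp : 0 < n - p := sub_pos.2 hn
  have h2np : 0 < 2 * n - p := by linarith
  have hpq : p < q := by
    have h1 : p < p * (2 * n - p) / (2 * (n - p)) := by
      rw [lt_div_iff₀ (by linarith)]
      nlinarith
    linarith
  have hq0 : 0 < q := hp0.trans hpq
  have hqp : 0 < q - p := sub_pos.2 hpq
  have hhabs : |h| = -h := abs_of_neg hh
  have hhpos : 0 < -h := neg_pos.2 hh
  have hPpos : 0 < |h| / F := div_pos (by rw [hhabs]; exact hhpos) hFpos
  set B := (p + q) / (2 * p) * (|h| / F) with hB
  have hc1 : 1 < (p + q) / (2 * p) := by rw [lt_div_iff₀ (by linarith)]; linarith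
  have hBpos : 0 < B := mul_pos (by linarith) hPpos
  have hk₀pos : 0 < k₀ := by rw [hk₀]; exact Real.rpow_pos_of_pos hBpos _
  set T := B ^ (p / (q - p)) with hT
  have hTpos : 0 < T := Real.rpow_pos_of_pos hBpos _
  -- k₀ ^ (p/q) = T
  have hkT : k₀ ^ (p / q) = T := by
    rw [hk₀, hT, ← Real.rpow_mul hBpos.le]
    congr 1
    field_simp
  -- k₀ = T * B
  have hkTB : k₀ = T * B := by
    have he : q / (q - p) = p / (q - p) + 1 := by field_simp; ring
    rw [hk₀, he, Real.rpow_add hBpos, Real.rpow_one, hT]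
  -- bound on A
  have hA2 : A ≤ k₀ * T * ((-h) * (q - p) / (2 * p)) := by
    have he : B ^ ((q + p) / (q - p)) = k₀ * T := by
      rw [hk₀, hT, ← Real.rpow_add hBpos]
      congr 1
      ring
    calc A ≤ B ^ ((q + p) / (q - p)) * (|h| * (q - p) / (2 * p)) := hsmall
      _ = k₀ * T * ((-h) * (q - p) / (2 * p)) := by rw [he, hhabs]
  -- splitting the integral of f
  have hsplit : ∫ x, f x ∂μ = (∫ x, max (f x) 0 ∂μ) - F := by
    rw [hF, ← integral_sub hf.pos_part hf.neg_part]
    congr 1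
    ext x
    rcases le_total (f x) 0 with hx | hx
    · rw [max_eq_right hx, max_eq_left (neg_nonneg.2 hx)]; ring
    · rw [max_eq_left hx, max_eq_right (neg_nonpos.2 hx)]; ring
  -- third term
  have hApos : 0 ≤ A := hA ▸ integral_nonneg_of_ae hanonneg
  have hD : k₀ ≤ (k₀ ^ (2 / q) + ε) ^ (q / 2) := by
    have h1 : (k₀ ^ (2 / q)) ^ (q / 2) = k₀ := by
      rw [← Real.rpow_mul hk₀pos.le]
      rw [show (2 / q) * (q / 2) = 1 by field_simp, Real.rpow_one]
    calc k₀ = (k₀ ^ (2 / q)) ^ (q / 2) := h1.symm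
      _ ≤ (k₀ ^ (2 / q) + ε) ^ (q / 2) := by
          apply Real.rpow_le_rpow (Real.rpow_nonneg hk₀pos.le _)
            (le_add_of_nonneg_right hε) (by positivity)
  have hI3 : ∫ x, a x / (k₀ ^ (2 / q) + ε) ^ (q / 2) ∂μ
      = A / (k₀ ^ (2 / q) + ε) ^ (q / 2) := by
    rw [hA, integral_div]
  have hI3le : (1 / q) * ∫ x, a x / (k₀ ^ (2 / q) + ε) ^ (q / 2) ∂μ ≤ A / (q * k₀) := by
    rw [hI3]
    have h1 : A / (k₀ ^ (2 / q) + ε) ^ (q / 2) ≤ A / k₀ := by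
      gcongr
    calc (1 / q) * (A / (k₀ ^ (2 / q) + ε) ^ (q / 2)) ≤ (1 / q) * (A / k₀) := by
          apply mul_le_mul_of_nonneg_left h1 (by positivity)
      _ = A / (q * k₀) := by field_simp
  -- key negativity
  have key : h / p * k₀ ^ (p / q) + k₀ * F / q + A / (q * k₀) ≤ 0 := by
    rw [hkT]
    have e1 : h / p * T + k₀ * F / q = -(T * (-h) * (q - p) / (2 * p * q)) := by
      rw [hkTB, hB, hhabs]
      field_simp
      ring
    have e2 : A / (q * k₀) ≤ T * (-h) * (q - p) / (2 * p * q) := by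
      have h1 : A / (q * k₀) ≤ (k₀ * T * ((-h) * (q - p) / (2 * p))) / (q * k₀) := by
        gcongr
      have h2 : (k₀ * T * ((-h) * (q - p) / (2 * p))) / (q * k₀)
          = T * (-h) * (q - p) / (2 * p * q) := by
        field_simp
      linarith [h1, h2.symm.le, h2.le]
    linarith
  -- comparison of coefficients
  set m := min ((|h| / F) ^ ((2 * n - p) / p)) 1 with hm
  have hm0 : 0 ≤ m := le_min (Real.rpow_nonneg hPpos.le _) one_pos.le
  have hpstarpos : 0 < n * p / (n - p) := div_pos (mul_pos (by linarith) hp0) hnp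
  have hma : m ≤ k₀ := by
    rcases le_or_gt 1 (|h| / F) with hP1 | hP1
    · have hB1 : (1 : ℝ) ≤ B := by rw [hB]; nlinarith [hc1, hP1]
      calc m ≤ 1 := min_le_right _ _
        _ ≤ k₀ := by rw [hk₀]; exact Real.one_le_rpow hB1 (le_of_lt (div_pos hq0 hqp))
    · have hexp : q / (q - p) ≤ (2 * n - p) / p := by
        rw [div_le_div_iff₀ hqp hp0]
        have h1 := (div_lt_iff₀ (by linarith : (0:ℝ) < 2 * (n - p))).1 hq1
        have h2 : (2 * n - p) * (q - p) - q * p = 2 * (n - p) * q - p * (2 * n - p) := by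
          ring
        linarith
      calc m ≤ (|h| / F) ^ ((2 * n - p) / p) := min_le_left _ _
        _ ≤ (|h| / F) ^ (q / (q - p)) :=
            Real.rpow_le_rpow_of_exponent_ge hPpos hP1.le hexp
        _ ≤ B ^ (q / (q - p)) := by
            apply Real.rpow_le_rpow hPpos.le _ (div_pos hq0 hqp).le
            rw [hB]
            nlinarith [hc1, hPpos]
        _ = k₀ := hk₀.symm
  have hmq : m / (n * p / (n - p)) ≤ k₀ / q := by
    calc m / (n * p / (n - p)) ≤ m / q := by
          apply div_le_div_of_nonneg_left hm0 hq0
          linarith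
      _ ≤ k₀ / q := by gcongr
  have hfp0 : 0 ≤ ∫ x, max (f x) 0 ∂μ := integral_nonneg fun x => le_max_right _ _
  have hl2 : m / (n * p / (n - p)) * ∫ x, max (f x) 0 ∂μ
      ≤ k₀ / q * ∫ x, max (f x) 0 ∂μ := mul_le_mul_of_nonneg_right hmq hfp0
  rw [hsplit]
  have g1 : k₀ / q * ((∫ x, max (f x) 0 ∂μ) - F)
      = k₀ / q * (∫ x, max (f x) 0 ∂μ) - k₀ * F / q := by ring
  have g2 : -(1 / (n * p / (n - p))) * m * (∫ x, max (f x) 0 ∂μ)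
      = -(m / (n * p / (n - p)) * (∫ x, max (f x) 0 ∂μ)) := by ring
  rw [g1, g2]
  linarith [key, hI3le, hl2]
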